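/- Let Φ1 be a state, suppose the type 3 move T3^{ij} is valid for Φ1 and the type 2 move T2^k, with k ≠ j, is invalid for T3^{ij}(Φ1). Then, after swapping the two moves, it is not possible that both are invalid: either T2^k is valid for Φ1, or T3^{ij} is valid for T2^k(Φ1). -/

import Mathlib

namespace CPaper


/-- The six types of moves on states (all indices 0-based). -/
inductive Move where
  | t1 (d : ℕ)
  | t2 (i : ℕ)
  | t3 (i j : ℕ)
  | t4 (i j : ℕ)
  | t5 (i j : ℕ)
  | t6 (i j : ℕ)

/-- A state is a list of tuples of integers. -/
abbrev State := List (List ℤ)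

/-- A genuine state: at least one tuple, and all tuples nonempty. -/
def IsState (Φ : State) : Prop := Φ ≠ [] ∧ ∀ t ∈ Φ, t ≠ []

/-- The entries of a state, read in order (flattened). -/
def entries (Φ : State) : List ℤ := Φ.flatten

/-- The number of positions of a state. -/
def numPos (Φ : State) : ℕ := (entries Φ).length

/-- The value at the (0-based) position `i` of the state `Φ`. -/
def entry (Φ : State) (i : ℕ) : ℤ := (entries Φ).getD i 0

/-- The (0-based) index of the tuple containing the flat position `i`. -/
def tupleIdx : State → ℕ → ℕ
  | [], _ => 0
  | t :: ts, i => if i < t.length then 0 else tupleIdx ts (i - t.length) + 1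

/-- Positions `i` and `j` lie in the same tuple of `Φ`. -/
def SameTuple (Φ : State) (i j : ℕ) : Prop := tupleIdx Φ i = tupleIdx Φ j

/-- Position `i` is dominant in `Φ`: its value bounds the absolute value of
every entry of the tuple containing it. -/
def DominantAt (Φ : State) (i : ℕ) : Prop :=
  ∀ k, k < numPos Φ → SameTuple Φ i k → |entry Φ k| ≤ entry Φ i

/-- Apply `f` at flat position `i`, preserving the tuple structure. -/
def modifyFlat (f : ℤ → ℤ) : ℕ → State → State
  | _, [] => []
  | i, t :: ts =>
    if i < t.length then (t.take i ++ f (t.getD i 0) :: t.drop (i + 1)) :: ts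
    else t :: modifyFlat f (i - t.length) ts

/-- Concatenate the `d`-th and `(d+1)`-th tuples of `Φ` (0-based). -/
def joinAt (Φ : State) (d : ℕ) : State :=
  Φ.take d ++ (Φ.getD d [] ++ Φ.getD (d + 1) []) :: Φ.drop (d + 2)

/-- The action of a move on a state. -/
def Move.apply : Move → State → State
  | .t1 d, Φ => joinAt Φ d
  | .t2 i, Φ => modifyFlat (· + 1) i Φ
  | .t3 i j, Φ => modifyFlat (· - 1) j (modifyFlat (· + 1) i Φ)
  | .t4 i j, Φ => modifyFlat (· - 1) j (modifyFlat (· + 1) i Φ)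
  | .t5 i j, Φ => modifyFlat (· + 1) j (modifyFlat (· + 1) i Φ)
  | .t6 i j, Φ => modifyFlat (· + 1) j (modifyFlat (· + 1) i Φ)

/-- A move is admissible for `Φ` when its indices are within bounds. -/
def Move.Admissible : Move → State → Prop
  | .t1 d, Φ => d + 1 < Φ.length
  | .t2 i, Φ => i < numPos Φ
  | .t3 i j, Φ => i < numPos Φ ∧ j < numPos Φ ∧ i ≠ j
  | .t4 i j, Φ => i < numPos Φ ∧ j < numPos Φ ∧ i ≠ j
  | .t5 i j, Φ => i < numPos Φ ∧ j < numPos Φ ∧ i ≠ j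
  | .t6 i j, Φ => i < numPos Φ ∧ j < numPos Φ ∧ i ≠ j

/-- Validity of a move for a state. -/
def Move.Valid : Move → State → Prop
  | .t1 d, Φ => d + 1 < Φ.length
  | .t2 i, Φ => i < numPos Φ ∧ DominantAt Φ i
  | .t3 i j, Φ =>
      i < numPos Φ ∧ j < numPos Φ ∧ i ≠ j ∧ SameTuple Φ i j ∧ DominantAt Φ i ∧ entry Φ j ≤ 0
  | .t4 i j, Φ =>
      i < numPos Φ ∧ j < numPos Φ ∧ i ≠ j ∧ SameTuple Φ i j ∧ DominantAt Φ i ∧ 0 < entry Φ j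
  | .t5 i j, Φ =>
      i < numPos Φ ∧ j < numPos Φ ∧ i ≠ j ∧ SameTuple Φ i j ∧ DominantAt Φ i ∧ entry Φ j < 0
  | .t6 i j, Φ =>
      i < numPos Φ ∧ j < numPos Φ ∧ i ≠ j ∧ SameTuple Φ i j ∧ DominantAt Φ i ∧ 0 ≤ entry Φ j

def Move.isType1 : Move → Prop
  | .t1 _ => True
  | _ => False

def Move.isType2 : Move → Prop
  | .t2 _ => True
  | _ => False

def Move.isType3 : Move → Prop
  | .t3 _ _ => True
  | _ => False

/-- The move is of one of the types 1, 2 or 3. -/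
def Move.isType123 : Move → Prop
  | .t1 _ => True
  | .t2 _ => True
  | .t3 _ _ => True
  | _ => False

/-- `ValidSeq ms Φ Ψ`: the list of moves `ms`, applied in order starting from `Φ`,
consists of valid moves and ends at `Ψ`. -/
def ValidSeq : List Move → State → State → Prop
  | [], Φ, Ψ => Φ = Ψ
  | m :: ms, Φ, Ψ => m.Valid Φ ∧ ValidSeq ms (m.apply Φ) Ψ

/-- A tuple of integers is C*_{Z,6}-realizable: the one-tuple state `[l]` is reachable
from `((0),...,(0))` by a finite sequence of valid moves of types 1–6. -/
def CStarZ6 (l : List ℤ) : Prop :=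
  ∃ ms : List Move, ValidSeq ms (List.replicate l.length ([0] : List ℤ)) [l]

/-- A tuple of integers is C*_{Z,3}-realizable: the one-tuple state `[l]` is reachable
from `((0),...,(0))` by a finite sequence of valid moves of types 1, 2 and 3. -/
def CStarZ3 (l : List ℤ) : Prop :=
  ∃ ms : List Move, (∀ m ∈ ms, m.isType123) ∧
    ValidSeq ms (List.replicate l.length ([0] : List ℤ)) [l]


private lemma modify_append_left {α} (f : α → α) :
    ∀ (i : ℕ) (t r : List α), i < t.length →
      (t ++ r).modify i f = t.modify i f ++ r
  | _, [], _, h => by simp at h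
  | 0, a :: t, r, _ => by simp
  | (i+1), a :: t, r, h => by
      simp only [List.cons_append, List.modify_succ_cons]
      rw [modify_append_left f i t r (by simpa using h)]

private lemma modify_append_right {α} (f : α → α) :
    ∀ (i : ℕ) (t r : List α), t.length ≤ i →
      (t ++ r).modify i f = t ++ r.modify (i - t.length) f
  | i, [], r, _ => by simp
  | (i+1), a :: t, r, h => by
      simp only [List.cons_append, List.modify_succ_cons]
      rw [modify_append_right f i t r (by simpa using h)]
      simp [Nat.succ_sub_succ]

private lemma entries_modifyFlat (f : ℤ → ℤ) :
    ∀ (i : ℕ) (Φ : State), entries (modifyFlat f i Φ) = (entries Φ).modify i f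
  | _, [] => by simp [modifyFlat, entries]
  | i, t :: ts => by
      simp only [modifyFlat]
      split
      · next h =>
        simp only [entries, List.flatten_cons]
        rw [modify_append_left f i t _ h,
          List.modify_eq_take_cons_drop h]
        congr 2
        simp [List.getD, List.getElem?_eq_getElem h]
      · next h =>
        push_neg at h
        simp only [entries, List.flatten_cons] at *
        rw [modify_append_right f i t _ h]
        exact congrArg (t ++ ·) (entries_modifyFlat f (i - t.length) ts)

private lemma map_length_modifyFlat (f : ℤ → ℤ) :
    ∀ (i : ℕ) (Φ : State), (modifyFlat f i Φ).map List.length = Φ.map List.length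
  | _, [] => rfl
  | i, t :: ts => by
      simp only [modifyFlat]
      split
      · next h =>
        simp
        omega
      · simp [map_length_modifyFlat f (i - t.length) ts]

private lemma tupleIdx_congr :
    ∀ (Φ Ψ : State), Φ.map List.length = Ψ.map List.length →
      ∀ i, tupleIdx Φ i = tupleIdx Ψ i
  | [], [], _, _ => rfl
  | t :: ts, s :: ss, h, i => by
      simp only [List.map_cons, List.cons.injEq] at h
      simp only [tupleIdx, h.1]
      split
      · rfl
      · rw [tupleIdx_congr ts ss h.2]

private lemma tupleIdx_modifyFlat (f : ℤ → ℤ) (i : ℕ) (Φ : State) (m : ℕ) :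
    tupleIdx (modifyFlat f i Φ) m = tupleIdx Φ m :=
  tupleIdx_congr _ _ (map_length_modifyFlat f i Φ) m

private lemma numPos_modifyFlat (f : ℤ → ℤ) (i : ℕ) (Φ : State) :
    numPos (modifyFlat f i Φ) = numPos Φ := by
  simp [numPos, entries_modifyFlat]

private lemma entry_modifyFlat_ne (f : ℤ → ℤ) (i : ℕ) (Φ : State) {m : ℕ} (h : m ≠ i) :
    entry (modifyFlat f i Φ) m = entry Φ m := by
  simp [entry, entries_modifyFlat, List.getD_eq_getElem?_getD,
    List.getElem?_modify_ne _ _ (Ne.symm h)]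

private lemma entry_modifyFlat_eq (f : ℤ → ℤ) (i : ℕ) (Φ : State) (h : i < numPos Φ) :
    entry (modifyFlat f i Φ) i = f (entry Φ i) := by
  simp [entry, entries_modifyFlat, List.getD, List.getElem?_modify_eq,
    List.getElem?_eq_getElem h]


/-- If a valid type 3 move `T3^{ij}` is followed by an invalid (admissible but not
valid) type 2 move `T2^k` with `k ≠ j`, then after the swap it is not possible
that both moves are invalid. -/
theorem T3_valid_T2_invalid_swap (Φ : State) (hΦ : IsState Φ) (i j k : ℕ)
    (hkj : k ≠ j)
    (hval : (Move.t3 i j).Valid Φ)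
    (hadm : (Move.t2 k).Admissible ((Move.t3 i j).apply Φ))
    (hinv : ¬ (Move.t2 k).Valid ((Move.t3 i j).apply Φ)) :
    (Move.t2 k).Valid Φ ∨ (Move.t3 i j).Valid ((Move.t2 k).apply Φ) := by
  obtain ⟨hi, hj, hij, hst, hdom, hj0⟩ := hval
  have hk : k < numPos Φ := by
    simpa [Move.Admissible, Move.apply, numPos_modifyFlat] using hadm
  by_cases hcase : SameTuple Φ k i ∧ entry Φ i ≤ entry Φ k
  · left
    exact ⟨hk, fun m hm hst' => (hdom m hm (hcase.1.symm.trans hst')).trans hcase.2⟩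
  · right
    push_neg at hcase
    have hki : k ≠ i := by
      intro h; subst h
      exact absurd (hcase rfl) (lt_irrefl _)
    simp only [Move.Valid, Move.apply]
    refine ⟨?_, ?_, hij, ?_, ?_, ?_⟩
    · rw [numPos_modifyFlat]; exact hi
    · rw [numPos_modifyFlat]; exact hj
    · show tupleIdx _ i = tupleIdx _ j
      rw [tupleIdx_modifyFlat, tupleIdx_modifyFlat]; exact hst
    · intro m hm hst'
      rw [numPos_modifyFlat] at hm
      have him : SameTuple Φ i m := by
        have h1 := tupleIdx_modifyFlat (· + 1) k Φ i
        have h2 := tupleIdx_modifyFlat (· + 1) k Φ m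
        exact (h1.symm.trans hst').trans h2
      rw [entry_modifyFlat_ne _ _ _ (Ne.symm hki)]
      by_cases hmk : m = k
      · subst hmk
        rw [entry_modifyFlat_eq _ _ _ hk]
        have h1 := hdom m hk him
        have h2 := hcase him.symm
        rw [abs_le] at h1 ⊢
        omega
      · rw [entry_modifyFlat_ne _ _ _ hmk]
        exact hdom m hm him
    · rw [entry_modifyFlat_ne _ _ _ (Ne.symm hkj)]
      exact hj0


end CPaper
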